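/- For all natural numbers k, m, n, (n+1)·F(k·n + 2m) = Σ_{i=0}^{n} L(k·i + m)·F(k·(n−i) + m). -/

import Mathlib

noncomputable def genFib (a b : ℝ) : ℕ → ℝ
  | 0 => 0
  | 1 => 1
  | n + 2 => a * genFib a b (n + 1) + b * genFib a b n

noncomputable def genLuc (a b : ℝ) : ℕ → ℝ
  | 0 => 2
  | 1 => a
  | n + 2 => a * genLuc a b (n + 1) + b * genLuc a b n

lemma genLuc_add_fib (a b : ℝ) : ∀ p : ℕ,
    genLuc a b p + a * genFib a b p = 2 * genFib a b (p + 1) := by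
  intro p
  induction p using Nat.twoStepInduction with
  | zero => simp [genFib, genLuc]
  | one => simp [genFib, genLuc]; ring
  | more p ih2 ih1 =>
    have : genLuc a b (p + 2) + a * genFib a b (p + 2)
        = a * (genLuc a b (p + 1) + a * genFib a b (p + 1))
          + b * (genLuc a b p + a * genFib a b p) := by
      simp [genFib, genLuc]; ring
    rw [this, ih1, ih2]
    show _ = 2 * genFib a b (p + 1 + 2)
    simp [genFib]; ring

lemma genLuc_mul_fib (a b : ℝ) (p : ℕ) : ∀ q : ℕ,
    genLuc a b p * genFib a b q + genFib a b p * genLuc a b q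
      = 2 * genFib a b (p + q) := by
  intro q
  induction q using Nat.twoStepInduction with
  | zero => simp [genFib, genLuc]; ring
  | one =>
    simp only [genFib, genLuc]
    have := genLuc_add_fib a b p
    linarith [this]
  | more q ih2 ih1 =>
    have h : genLuc a b p * genFib a b (q + 2) + genFib a b p * genLuc a b (q + 2)
        = a * (genLuc a b p * genFib a b (q + 1) + genFib a b p * genLuc a b (q + 1))
          + b * (genLuc a b p * genFib a b q + genFib a b p * genLuc a b q) := by
      simp [genFib, genLuc]; ring
    rw [h, ih1, ih2]
    have : p + (q + 2) = (p + q) + 2 := by omega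
    rw [this]
    simp [genFib]
    rw [show p + q + 1 = p + (q+1) by omega]
    ring

theorem genFib_sum_identity (a b : ℝ) (k m n : ℕ) :
    (n + 1 : ℝ) * genFib a b (k * n + 2 * m) =
      ∑ i ∈ Finset.range (n + 1),
        genLuc a b (k * i + m) * genFib a b (k * (n - i) + m) := by
  have key : (2 : ℝ) * ∑ i ∈ Finset.range (n + 1),
      genLuc a b (k * i + m) * genFib a b (k * (n - i) + m)
      = 2 * ((n + 1 : ℝ) * genFib a b (k * n + 2 * m)) := by
    have hrefl := Finset.sum_range_reflect
      (fun i => genLuc a b (k * i + m) * genFib a b (k * (n - i) + m)) (n + 1)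
    calc (2 : ℝ) * ∑ i ∈ Finset.range (n + 1),
          genLuc a b (k * i + m) * genFib a b (k * (n - i) + m)
        = ∑ i ∈ Finset.range (n + 1),
            (genLuc a b (k * i + m) * genFib a b (k * (n - i) + m)
             + genLuc a b (k * (n - i) + m) * genFib a b (k * i + m)) := by
          have hS : ∑ i ∈ Finset.range (n + 1),
              genLuc a b (k * i + m) * genFib a b (k * (n - i) + m)
              = ∑ j ∈ Finset.range (n + 1),
                genLuc a b (k * (n - j) + m) * genFib a b (k * j + m) := by
            rw [← Finset.sum_range_reflect
              (fun i => genLuc a b (k * i + m) * genFib a b (k * (n - i) + m)) (n + 1)]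
            apply Finset.sum_congr rfl
            intro j hj
            simp only [Finset.mem_range] at hj
            have : n - (n - j) = j := by omega
            simp [this]
          rw [two_mul]
          nth_rewrite 2 [hS]
          rw [← Finset.sum_add_distrib]
      _ = ∑ i ∈ Finset.range (n + 1), 2 * genFib a b (k * n + 2 * m) := by
          apply Finset.sum_congr rfl
          intro i hi
          simp only [Finset.mem_range] at hi
          have hile : i ≤ n := by omega
          have : (k * i + m) + (k * (n - i) + m) = k * n + 2 * m := by
            have : k * i + k * (n - i) = k * n := by
              rw [← Nat.mul_add, Nat.add_sub_cancel' hile]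
            omega
          rw [← this]
          rw [← genLuc_mul_fib a b (k * i + m) (k * (n - i) + m)]
          ring
      _ = 2 * ((n + 1 : ℝ) * genFib a b (k * n + 2 * m)) := by
          rw [Finset.sum_const, Finset.card_range]
          ring
  linarith [key]
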